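/- Let p be a prime number and let K ⊆ K' be fields of characteristic 0, each complete with respect to a nonarchimedean absolute value induced by a discrete valuation, such that the absolute value of K' restricts to that of K. Let λ := Σ_{k≥0} (−1)^k X^k/(k+1) ∈ K⟦X⟧ (the power series log(1+X)/X, whose coefficients are rational numbers). Then λ ∈ B_rig,K^+, and inside B_rig,K'^+ one has λ·B_rig,K'^+ ∩ B_rig,K^+ = λ·B_rig,K^+; that is, if y ∈ B_rig,K'^+ satisfies λ·y ∈ B_rig,K^+, then y ∈ B_rig,K^+. -/

import Mathlib

/-!
Statement 5: Let `K ⊆ K'` be fields of characteristic `0`, complete for nonarchimedean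
absolute values induced by discrete valuations, the absolute value of `K'` restricting
to that of `K`.  Let `λ = log(1+X)/X = Σ (-1)^k X^k/(k+1)`.  Then `λ ∈ B⁺_rig,K` and
`λ·B⁺_rig,K' ∩ B⁺_rig,K = λ·B⁺_rig,K` inside `B⁺_rig,K'`; that is, if `y ∈ B⁺_rig,K'`
and `λ·y ∈ B⁺_rig,K`, then `y ∈ B⁺_rig,K`.
-/

open PowerSeries Filter Finset

/-- The ring of power series converging on the open unit disk over `K`: those
`f = Σ aₖ Xᵏ` with `‖aₖ‖ * ρᵏ → 0` for every `0 ≤ ρ < 1`. -/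
noncomputable def BRig (K : Type*) [NormedField K] : Subring (PowerSeries K) where
  carrier := {f | ∀ ρ : ℝ, 0 ≤ ρ → ρ < 1 →
    Tendsto (fun k : ℕ => ‖(PowerSeries.coeff (R := K) k) f‖ * ρ ^ k) atTop (nhds 0)}
  zero_mem' := by
    intro ρ _ _
    simp
  one_mem' := by
    intro ρ _ _
    refine tendsto_const_nhds.congr' ?_
    filter_upwards [eventually_ge_atTop 1] with k hk
    have : (PowerSeries.coeff (R := K) k) 1 = 0 := by
      simp [PowerSeries.coeff_one, Nat.one_le_iff_ne_zero.mp hk]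
    simp [this]
  add_mem' := by
    intro f g hf hg ρ h0 h1
    have hlim : Tendsto (fun k : ℕ => ‖(PowerSeries.coeff (R := K) k) f‖ * ρ ^ k
        + ‖(PowerSeries.coeff (R := K) k) g‖ * ρ ^ k) atTop (nhds 0) := by
      simpa using (hf ρ h0 h1).add (hg ρ h0 h1)
    refine squeeze_zero (fun k => by positivity) (fun k => ?_) hlim
    have hb : ‖(PowerSeries.coeff (R := K) k) (f + g)‖
        ≤ ‖(PowerSeries.coeff (R := K) k) f‖ + ‖(PowerSeries.coeff (R := K) k) g‖ := by
      simp only [map_add]; exact norm_add_le _ _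
    calc ‖(PowerSeries.coeff (R := K) k) (f + g)‖ * ρ ^ k
        ≤ (‖(PowerSeries.coeff (R := K) k) f‖ + ‖(PowerSeries.coeff (R := K) k) g‖) * ρ ^ k :=
          mul_le_mul_of_nonneg_right hb (by positivity)
      _ = ‖(PowerSeries.coeff (R := K) k) f‖ * ρ ^ k + ‖(PowerSeries.coeff (R := K) k) g‖ * ρ ^ k := by ring
  neg_mem' := by
    intro f hf ρ h0 h1
    simpa using hf ρ h0 h1
  mul_mem' := by
    intro f g hf hg ρ h0 h1
    obtain ⟨ρ', hρ'0, hρ'1, hρρ'⟩ : ∃ ρ' : ℝ, 0 < ρ' ∧ ρ' < 1 ∧ ρ < ρ' :=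
      ⟨(ρ + 1) / 2, by linarith, by linarith, by linarith⟩
    obtain ⟨Ca, hCa⟩ := (hf ρ' hρ'0.le hρ'1).bddAbove_range
    obtain ⟨Cb, hCb⟩ := (hg ρ' hρ'0.le hρ'1).bddAbove_range
    obtain ⟨Cf, hCf0, hfb⟩ : ∃ C : ℝ, 0 < C ∧ ∀ k : ℕ, ‖(PowerSeries.coeff (R := K) k) f‖ ≤ C / ρ' ^ k := by
      refine ⟨max Ca 1, lt_of_lt_of_le one_pos (le_max_right _ _), fun k => ?_⟩
      rw [le_div_iff₀ (by positivity)]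
      exact le_trans (hCa (Set.mem_range_self k)) (le_max_left _ _)
    obtain ⟨Cg, hCg0, hgb⟩ : ∃ C : ℝ, 0 < C ∧ ∀ k : ℕ, ‖(PowerSeries.coeff (R := K) k) g‖ ≤ C / ρ' ^ k := by
      refine ⟨max Cb 1, lt_of_lt_of_le one_pos (le_max_right _ _), fun k => ?_⟩
      rw [le_div_iff₀ (by positivity)]
      exact le_trans (hCb (Set.mem_range_self k)) (le_max_left _ _)
    have hr0 : 0 ≤ ρ / ρ' := by positivity
    have hr1 : ρ / ρ' < 1 := (div_lt_one hρ'0).mpr hρρ'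
    have hlim : Tendsto (fun n : ℕ => Cf * Cg * (((n:ℝ) + 1) * (ρ / ρ') ^ n)) atTop (nhds 0) := by
      have h1' : Tendsto (fun n : ℕ => (n:ℝ) * (ρ / ρ') ^ n) atTop (nhds 0) := by
        have := (summable_pow_mul_geometric_of_norm_lt_one 1
          (r := ρ / ρ') (by rwa [Real.norm_eq_abs, abs_of_nonneg hr0])).tendsto_atTop_zero
        simpa using this
      have h2' : Tendsto (fun n : ℕ => (ρ / ρ') ^ n) atTop (nhds 0) :=
        tendsto_pow_atTop_nhds_zero_of_lt_one hr0 hr1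
      have := (h1'.add h2').const_mul (Cf * Cg)
      simpa [add_mul, mul_add] using this
    refine squeeze_zero (fun k => by positivity) (fun n => ?_) hlim
    have hstep : ‖(PowerSeries.coeff (R := K) n) (f * g)‖ ≤ ((n:ℝ) + 1) * (Cf * Cg / ρ' ^ n) := by
      rw [PowerSeries.coeff_mul]
      calc ‖∑ p ∈ antidiagonal n, (PowerSeries.coeff (R := K) p.1) f * (PowerSeries.coeff (R := K) p.2) g‖
          ≤ ∑ p ∈ antidiagonal n, ‖(PowerSeries.coeff (R := K) p.1) f * (PowerSeries.coeff (R := K) p.2) g‖ :=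
            norm_sum_le _ _
        _ ≤ ∑ _p ∈ antidiagonal n, Cf * Cg / ρ' ^ n := by
            refine Finset.sum_le_sum fun p hp => ?_
            rw [Finset.HasAntidiagonal.mem_antidiagonal] at hp
            calc ‖(PowerSeries.coeff (R := K) p.1) f * (PowerSeries.coeff (R := K) p.2) g‖
                = ‖(PowerSeries.coeff (R := K) p.1) f‖ * ‖(PowerSeries.coeff (R := K) p.2) g‖ := norm_mul _ _
              _ ≤ Cf / ρ' ^ p.1 * (Cg / ρ' ^ p.2) :=
                  mul_le_mul (hfb p.1) (hgb p.2) (norm_nonneg _) (by positivity)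
              _ = Cf * Cg / ρ' ^ n := by
                  rw [div_mul_div_comm, ← pow_add, hp]
        _ = ((n:ℝ) + 1) * (Cf * Cg / ρ' ^ n) := by
            rw [Finset.sum_const, Finset.Nat.card_antidiagonal]

            ring
    have hρ'ne : ρ' ^ n ≠ 0 := by positivity
    calc ‖(PowerSeries.coeff (R := K) n) (f * g)‖ * ρ ^ n
        ≤ ((n:ℝ) + 1) * (Cf * Cg / ρ' ^ n) * ρ ^ n := by gcongr
      _ = Cf * Cg * (((n:ℝ) + 1) * (ρ / ρ') ^ n) := by
          rw [div_pow]
          field_simp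

section Aux

lemma mem_BRig_iff {K : Type*} [NormedField K] (x : PowerSeries K) :
    x ∈ BRig K ↔ ∀ ρ : ℝ, 0 ≤ ρ → ρ < 1 →
      Tendsto (fun k : ℕ => ‖(PowerSeries.coeff (R := K) k) x‖ * ρ ^ k) atTop (nhds 0) :=
  Iff.rfl

variable {K K' : Type*} [NormedField K] [NormedField K']

lemma aux_norm_nat_le_one (hna : IsNonarchimedean (fun x : K => ‖x‖)) (n : ℕ) :
    ‖(n : K)‖ ≤ 1 := by
  induction n with
  | zero => simp
  | succ n ih =>
    have h := hna (n : K) 1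
    push_cast
    calc ‖(n : K) + 1‖ ≤ max ‖(n : K)‖ ‖(1 : K)‖ := h
      _ ≤ 1 := by simp [ih]

lemma aux_norm_int_le_one (hna : IsNonarchimedean (fun x : K => ‖x‖)) (a : ℤ) :
    ‖(a : K)‖ ≤ 1 := by
  have h1 := aux_norm_nat_le_one hna a.natAbs
  rcases Int.natAbs_eq a with h | h
  · rw [h, Int.cast_natCast]; exact h1
  · rw [h, Int.cast_neg, Int.cast_natCast, norm_neg]; exact h1

lemma aux_bound [CharZero K] (hna : IsNonarchimedean (fun x : K => ‖x‖)) :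
    ∃ M : ℕ, ∀ n : ℕ, n ≠ 0 → ‖(n : K)‖⁻¹ ≤ (n : ℝ) ^ M := by
  classical
  by_cases hA : ∀ n : ℕ, n ≠ 0 → ‖(n : K)‖ = 1
  · exact ⟨0, fun n hn => by simp [hA n hn]⟩
  push_neg at hA
  obtain ⟨n₀, hn₀, hne⟩ := hA
  have hP : ∃ n : ℕ, n ≠ 0 ∧ ‖(n : K)‖ < 1 :=
    ⟨n₀, hn₀, lt_of_le_of_ne (aux_norm_nat_le_one hna n₀) hne⟩
  set q := Nat.find hP with hqdef
  obtain ⟨hq0, hqlt⟩ := Nat.find_spec hP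
  rw [← hqdef] at hq0 hqlt
  have hq2 : 2 ≤ q := by
    have hq1 : q ≠ 1 := by
      intro h
      rw [h] at hqlt
      simp at hqlt
    omega
  -- every m with ‖m‖ < 1 is divisible by q
  have hdvd : ∀ m : ℕ, ‖(m : K)‖ < 1 → q ∣ m := by
    intro m hm
    set g := Nat.gcd q m with hgdef
    have hg0 : g ≠ 0 := Nat.gcd_ne_zero_left hq0
    have hbez := Nat.gcd_eq_gcd_ab q m
    have hglt : ‖(g : K)‖ < 1 := by
      have hcast : ((g : K)) = (q : K) * ((Nat.gcdA q m : ℤ) : K)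
          + (m : K) * ((Nat.gcdB q m : ℤ) : K) := by
        have := congrArg (fun z : ℤ => (z : K)) hbez
        push_cast at this ⊢
        simpa using this
      rw [hcast]
      refine lt_of_le_of_lt (hna _ _) (max_lt ?_ ?_)
      · calc ‖(q : K) * ((Nat.gcdA q m : ℤ) : K)‖
            = ‖(q : K)‖ * ‖((Nat.gcdA q m : ℤ) : K)‖ := norm_mul _ _
          _ ≤ ‖(q : K)‖ * 1 :=
            mul_le_mul_of_nonneg_left (aux_norm_int_le_one hna _) (norm_nonneg _)
          _ < 1 := by rw [mul_one]; exact hqlt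
      · calc ‖(m : K) * ((Nat.gcdB q m : ℤ) : K)‖
            = ‖(m : K)‖ * ‖((Nat.gcdB q m : ℤ) : K)‖ := norm_mul _ _
          _ ≤ ‖(m : K)‖ * 1 :=
            mul_le_mul_of_nonneg_left (aux_norm_int_le_one hna _) (norm_nonneg _)
          _ < 1 := by rw [mul_one]; exact hm
    have hgq : g ≤ q := Nat.le_of_dvd (Nat.pos_of_ne_zero hq0) (Nat.gcd_dvd_left q m)
    have hnotlt : ¬ g < q := fun h => Nat.find_min hP h ⟨hg0, hglt⟩
    have : g = q := le_antisymm hgq (not_lt.mp hnotlt)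
    exact this ▸ Nat.gcd_dvd_right q m
  -- lower bound
  have hlow : ∀ n : ℕ, n ≠ 0 → ‖(q : K)‖ ^ (Nat.log q n) ≤ ‖(n : K)‖ := by
    intro n
    induction n using Nat.strong_induction_on with
    | _ n ih =>
      intro hn
      by_cases h1 : ‖(n : K)‖ = 1
      · rw [h1]; exact pow_le_one₀ (norm_nonneg _) hqlt.le
      · have hlt : ‖(n : K)‖ < 1 := lt_of_le_of_ne (aux_norm_nat_le_one hna n) h1
        obtain ⟨m, rfl⟩ := hdvd n hlt
        have hm0 : m ≠ 0 := by rintro rfl; simp at hn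
        have hmlt : m < q * m := by
          have h2m : 2 * m ≤ q * m := Nat.mul_le_mul_right m hq2
          have := Nat.pos_of_ne_zero hm0
          omega
        have hih := ih m hmlt hm0
        have hlog : Nat.log q (q * m) = Nat.log q m + 1 := by
          rw [mul_comm, Nat.log_mul_base (by omega) hm0]
        rw [hlog, pow_succ, Nat.cast_mul, norm_mul, mul_comm ‖(q : K)‖]
        exact mul_le_mul_of_nonneg_right hih (norm_nonneg _)
  -- choose M
  have hq0K : (0 : ℝ) < ‖(q : K)‖ := by
    rw [norm_pos_iff]
    exact Nat.cast_ne_zero.mpr hq0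
  obtain ⟨M, hM⟩ := pow_unbounded_of_one_lt (R := ℝ) ‖(q : K)‖⁻¹ one_lt_two
  refine ⟨M, fun n hn => ?_⟩
  set L := Nat.log q n with hL
  have hnK : (0 : ℝ) < ‖(n : K)‖ := by
    rw [norm_pos_iff]
    exact Nat.cast_ne_zero.mpr hn
  have h1 : ‖(n : K)‖⁻¹ ≤ (‖(q : K)‖⁻¹) ^ L := by
    rw [inv_pow]
    exact inv_anti₀ (by positivity) (hlow n hn)
  have h2 : (‖(q : K)‖⁻¹) ^ L ≤ ((2 : ℝ) ^ M) ^ L :=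
    pow_le_pow_left₀ (by positivity) hM.le L
  have h3 : ((2 : ℝ) ^ M) ^ L = ((2 : ℝ) ^ L) ^ M := by
    rw [← pow_mul, ← pow_mul, mul_comm]
  have h4 : ((2 : ℝ) ^ L) ^ M ≤ ((n : ℝ)) ^ M := by
    apply pow_le_pow_left₀ (by positivity)
    calc (2 : ℝ) ^ L ≤ ((q : ℝ)) ^ L := by
          apply pow_le_pow_left₀ (by norm_num)
          exact_mod_cast hq2
      _ ≤ (n : ℝ) := by exact_mod_cast Nat.pow_log_le_self q hn
  calc ‖(n : K)‖⁻¹ ≤ (‖(q : K)‖⁻¹) ^ L := h1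
    _ ≤ ((2 : ℝ) ^ M) ^ L := h2
    _ = ((2 : ℝ) ^ L) ^ M := h3
    _ ≤ (n : ℝ) ^ M := h4

lemma aux_tendsto (M : ℕ) {ρ : ℝ} (h0 : 0 ≤ ρ) (h1 : ρ < 1) :
    Tendsto (fun k : ℕ => ((k : ℝ) + 1) ^ M * ρ ^ k) atTop (nhds 0) := by
  rcases h0.eq_or_lt with h | h
  · refine tendsto_const_nhds.congr' ?_
    filter_upwards [eventually_ge_atTop 1] with k hk
    rw [← h, zero_pow (by omega), mul_zero]
  · have base : Tendsto (fun k : ℕ => (k : ℝ) ^ M * ρ ^ k) atTop (nhds 0) := by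
      have := (summable_pow_mul_geometric_of_norm_lt_one M
        (r := ρ) (by rwa [Real.norm_eq_abs, abs_of_nonneg h0])).tendsto_atTop_zero
      simpa using this
    have hshift : Tendsto (fun k : ℕ => ((k : ℝ) + 1) ^ M * ρ ^ (k + 1)) atTop (nhds 0) := by
      refine (base.comp (tendsto_add_atTop_nat 1)).congr fun k => ?_
      show (((k + 1 : ℕ)) : ℝ) ^ M * ρ ^ (k + 1) = _
      push_cast
      ring
    have := hshift.const_mul ρ⁻¹
    rw [mul_zero] at this
    refine this.congr fun k => ?_
    rw [pow_succ]
    field_simp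

lemma aux_map_mem (f : K →+* K') (hf : ∀ x : K, ‖f x‖ = ‖x‖) {x : PowerSeries K}
    (hx : x ∈ BRig K) : PowerSeries.map f x ∈ BRig K' := by
  rw [mem_BRig_iff]
  intro ρ h0 h1
  simpa [PowerSeries.coeff_map, hf] using hx ρ h0 h1

end Aux

theorem statement5
    (p : ℕ) (hp : p.Prime)
    (K K' : Type*) [NormedField K] [NormedField K'] [CharZero K] [CharZero K']
    [CompleteSpace K] [CompleteSpace K']
    -- `K ⊆ K'`, the absolute value of `K'` restricting to that of `K`
    (f : K →+* K') (hf : ∀ x : K, ‖f x‖ = ‖x‖)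
    -- both absolute values are nonarchimedean ...
    (hna : IsNonarchimedean (fun x : K => ‖x‖))
    (hna' : IsNonarchimedean (fun x : K' => ‖x‖))
    -- ... and induced by discrete valuations
    (π : K) (hπ0 : 0 < ‖π‖) (hπ1 : ‖π‖ < 1)
    (hdisc : ∀ x : K, x ≠ 0 → ∃ n : ℤ, ‖x‖ = ‖π‖ ^ n)
    (π' : K') (hπ'0 : 0 < ‖π'‖) (hπ'1 : ‖π'‖ < 1)
    (hdisc' : ∀ x : K', x ≠ 0 → ∃ n : ℤ, ‖x‖ = ‖π'‖ ^ n)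
    -- `λ = log(1+X)/X = Σ_{k≥0} (-1)^k X^k/(k+1)`
    (lam : PowerSeries K)
    (hlam : lam = PowerSeries.mk (fun k => ((-1 : K) ^ k) / ((k : K) + 1))) :
    -- `λ` converges on the open unit disk, ...
    lam ∈ BRig K ∧
    -- ... `λ·B⁺_rig,K' ∩ B⁺_rig,K = λ·B⁺_rig,K` inside `K'⟦X⟧`, ...
    ({z : PowerSeries K' | ∃ y ∈ (BRig K' : Set (PowerSeries K')),
        z = (PowerSeries.map f) lam * y} ∩
      ((BRig K).map (PowerSeries.map f) : Set (PowerSeries K')) =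
      {z : PowerSeries K' | ∃ x ∈ ((BRig K).map (PowerSeries.map f) :
        Set (PowerSeries K')), z = (PowerSeries.map f) lam * x}) ∧
    -- ... that is, if `y ∈ B⁺_rig,K'` and `λ·y ∈ B⁺_rig,K`, then `y ∈ B⁺_rig,K`
    (∀ y : PowerSeries K', y ∈ BRig K' →
      (PowerSeries.map f) lam * y ∈ (BRig K).map (PowerSeries.map f) →
      y ∈ (BRig K).map (PowerSeries.map f)) := by
    classical
  -- constant coefficient of `lam` is 1
  have h0 : (PowerSeries.constantCoeff (R := K)) lam = 1 := by
    rw [hlam, ← PowerSeries.coeff_zero_eq_constantCoeff, PowerSeries.coeff_mk]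
    norm_num
  have hinv : lam⁻¹ * lam = 1 :=
    PowerSeries.inv_mul_cancel lam (by rw [h0]; exact one_ne_zero)
  -- coefficient norms of `lam`
  have hcoeff : ∀ k : ℕ, ‖(PowerSeries.coeff (R := K) k) lam‖ = ‖((k + 1 : ℕ) : K)‖⁻¹ := by
    intro k
    rw [hlam, PowerSeries.coeff_mk, norm_div, norm_pow, norm_neg, norm_one, one_pow]
    have hc : ((k + 1 : ℕ) : K) = (k : K) + 1 := by push_cast; ring
    rw [hc, one_div]
  obtain ⟨M, hM⟩ := aux_bound hna
  -- Part 1: `lam ∈ BRig K`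
  have part1 : lam ∈ BRig K := by
    rw [mem_BRig_iff]
    intro ρ hρ0 hρ1
    refine squeeze_zero (fun k => by positivity) (fun k => ?_) (aux_tendsto M hρ0 hρ1)
    rw [hcoeff k]
    refine mul_le_mul_of_nonneg_right ?_ (by positivity)
    calc ‖((k + 1 : ℕ) : K)‖⁻¹ ≤ ((k + 1 : ℕ) : ℝ) ^ M := hM (k + 1) (Nat.succ_ne_zero k)
      _ = ((k : ℝ) + 1) ^ M := by push_cast; ring
  -- Part 3: the key divisibility statement
  have part3 : ∀ y : PowerSeries K', y ∈ BRig K' →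
      (PowerSeries.map f) lam * y ∈ (BRig K).map (PowerSeries.map f) →
      y ∈ (BRig K).map (PowerSeries.map f) := by
    intro y hy hmem
    obtain ⟨x, hx, hxeq⟩ := Subring.mem_map.mp hmem
    have hmapeq : PowerSeries.map f (lam⁻¹ * x) = y := by
      calc PowerSeries.map f (lam⁻¹ * x)
          = PowerSeries.map f lam⁻¹ * PowerSeries.map f x := map_mul _ _ _
        _ = PowerSeries.map f lam⁻¹ * (PowerSeries.map f lam * y) := by rw [hxeq]
        _ = PowerSeries.map f (lam⁻¹ * lam) * y := by rw [map_mul]; ring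
        _ = y := by rw [hinv, map_one, one_mul]
    refine Subring.mem_map.mpr ⟨lam⁻¹ * x, ?_, hmapeq⟩
    rw [mem_BRig_iff]
    intro ρ hρ0 hρ1
    refine (hy ρ hρ0 hρ1).congr fun k => ?_
    rw [← hmapeq, PowerSeries.coeff_map, hf]
  refine ⟨part1, ?_, part3⟩
  -- Part 2: the set equality
  ext z
  simp only [Set.mem_inter_iff, Set.mem_setOf_eq, SetLike.mem_coe]
  constructor
  · rintro ⟨⟨y, hy, rfl⟩, hz2⟩
    exact ⟨y, part3 y hy hz2, rfl⟩
  · rintro ⟨x', hx', rfl⟩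
    obtain ⟨x, hx, rfl⟩ := Subring.mem_map.mp hx'
    refine ⟨⟨PowerSeries.map f x, aux_map_mem f hf hx, rfl⟩, ?_⟩
    exact Subring.mem_map.mpr ⟨lam * x, mul_mem part1 hx, by rw [map_mul]⟩
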